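/- Let X be a complex separable Banach space and T a bounded operator on X such that the closed linear span of the eigenspaces ker(T − λ) for |λ| < 1 equals X and the closed linear span of the eigenspaces ker(T − λ) for |λ| > 1 equals X. Then T is hypercyclic (Godefroy–Shapiro criterion). -/

import Mathlib

open Filter Topology Set

/-- **Godefroy–Shapiro criterion.** If the eigenvectors of `T` associated to eigenvalues of
modulus `< 1` span a dense subspace of `X`, and likewise for eigenvalues of modulus `> 1`,
then `T` is hypercyclic. -/
theorem godefroy_shapiro_criterion
    {X : Type*} [NormedAddCommGroup X] [NormedSpace ℂ X] [CompleteSpace X]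
    [TopologicalSpace.SeparableSpace X]
    (T : X →L[ℂ] X)
    (hminus : Dense ((Submodule.span ℂ {x : X | ∃ lam : ℂ, ‖lam‖ < 1 ∧ T x = lam • x}) : Set X))
    (hplus : Dense ((Submodule.span ℂ {x : X | ∃ lam : ℂ, 1 < ‖lam‖ ∧ T x = lam • x}) : Set X)) :
    ∃ x : X, Dense (Set.range fun n : ℕ => (T ^ n) x) := by
  -- Claim A: for u in the span of small eigenvectors, T^n u → 0
  have hA : ∀ u ∈ Submodule.span ℂ {x : X | ∃ lam : ℂ, ‖lam‖ < 1 ∧ T x = lam • x},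
      Tendsto (fun n : ℕ => (T ^ n) u) atTop (𝓝 0) := by
    intro u hu
    induction hu using Submodule.span_induction with
    | mem x hx =>
      obtain ⟨lam, hlam, hTx⟩ := hx
      have hpow : ∀ n : ℕ, (T ^ n) x = lam ^ n • x := by
        intro n
        induction n with
        | zero => simp
        | succ k ih =>
          rw [pow_succ, ContinuousLinearMap.mul_apply, hTx, map_smul, ih, smul_smul, ← pow_succ']
      simp only [hpow]
      have := (tendsto_pow_atTop_nhds_zero_of_norm_lt_one hlam).smul_const x
      simpa using this
    | zero => simp only [map_zero]; exact tendsto_const_nhds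
    | add x y _ _ hx hy => simpa using hx.add hy
    | smul a x _ hx => simpa using hx.const_smul a
  -- Claim B: for v in the span of large eigenvectors, there is w n → 0 with T^n (w n) = v
  have hB : ∀ v ∈ Submodule.span ℂ {x : X | ∃ lam : ℂ, 1 < ‖lam‖ ∧ T x = lam • x},
      ∃ w : ℕ → X, Tendsto w atTop (𝓝 0) ∧ ∀ n, (T ^ n) (w n) = v := by
    intro v hv
    induction hv using Submodule.span_induction with
    | mem x hx =>
      obtain ⟨lam, hlam, hTx⟩ := hx
      have hlam0 : lam ≠ 0 := by
        intro h; rw [h, norm_zero] at hlam; linarith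
      refine ⟨fun n => (lam⁻¹) ^ n • x, ?_, ?_⟩
      · have hinv : ‖lam⁻¹‖ < 1 := by
          rw [norm_inv]
          exact inv_lt_one_of_one_lt₀ hlam
        have := (tendsto_pow_atTop_nhds_zero_of_norm_lt_one hinv).smul_const x
        simpa using this
      · intro n
        have hpow : ∀ m : ℕ, (T ^ m) x = lam ^ m • x := by
          intro m
          induction m with
          | zero => simp
          | succ k ih =>
            rw [pow_succ, ContinuousLinearMap.mul_apply, hTx, map_smul, ih, smul_smul, ← pow_succ']
        rw [map_smul, hpow, smul_smul, ← mul_pow, inv_mul_cancel₀ hlam0, one_pow, one_smul]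
    | zero =>
      exact ⟨fun _ => 0, tendsto_const_nhds, fun n => by simp⟩
    | add x y _ _ hx hy =>
      obtain ⟨w1, hw1, hw1'⟩ := hx
      obtain ⟨w2, hw2, hw2'⟩ := hy
      exact ⟨fun n => w1 n + w2 n, by simpa using hw1.add hw2,
        fun n => by rw [map_add, hw1' n, hw2' n]⟩
    | smul a x _ hx =>
      obtain ⟨w, hw, hw'⟩ := hx
      exact ⟨fun n => a • w n, by simpa using hw.const_smul a,
        fun n => by simp [hw' n]⟩
  -- Topological transitivity
  have htrans : ∀ U V : Set X, IsOpen U → IsOpen V → U.Nonempty → V.Nonempty →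
      ∃ n : ℕ, ∃ z ∈ U, (T ^ n) z ∈ V := by
    intro U V hU hV hUne hVne
    obtain ⟨u, huU, huS⟩ := hminus.inter_open_nonempty U hU hUne
    obtain ⟨v, hvV, hvS⟩ := hplus.inter_open_nonempty V hV hVne
    obtain ⟨w, hw0, hwT⟩ := hB v hvS
    have h1 : Tendsto (fun n : ℕ => u + w n) atTop (𝓝 u) := by
      simpa using tendsto_const_nhds.add hw0
    have h2 : Tendsto (fun n : ℕ => (T ^ n) (u + w n)) atTop (𝓝 v) := by
      have : (fun n : ℕ => (T ^ n) (u + w n)) = fun n => (T ^ n) u + v := by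
        funext n; rw [map_add, hwT n]
      rw [this]
      simpa using (hA u huS).add (tendsto_const_nhds : Tendsto (fun _ : ℕ => v) atTop (𝓝 v))
    have hUmem : ∀ᶠ n in atTop, u + w n ∈ U := h1.eventually (hU.mem_nhds huU)
    have hVmem : ∀ᶠ n in atTop, (T ^ n) (u + w n) ∈ V := h2.eventually (hV.mem_nhds hvV)
    obtain ⟨n, hn1, hn2⟩ := (hUmem.and hVmem).exists
    exact ⟨n, u + w n, hn1, hn2⟩
  -- Baire category argument
  obtain ⟨b, hbc, hbne, hb⟩ := TopologicalSpace.exists_countable_basis X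
  have hGopen : ∀ V ∈ b, IsOpen (⋃ n : ℕ, (fun x => (T ^ n) x) ⁻¹' V) := by
    intro V hV
    exact isOpen_iUnion fun n => ((T ^ n).continuous).isOpen_preimage V (hb.isOpen hV)
  have hGdense : ∀ V ∈ b, Dense (⋃ n : ℕ, (fun x => (T ^ n) x) ⁻¹' V) := by
    intro V hV
    rw [dense_iff_inter_open]
    intro U hU hUne
    have hVne : V.Nonempty := by
      rcases Set.eq_empty_or_nonempty V with h | h
      · exact absurd (h ▸ hV) hbne
      · exact h
    obtain ⟨n, z, hzU, hzV⟩ := htrans U V hU (hb.isOpen hV) hUne hVne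
    exact ⟨z, hzU, Set.mem_iUnion.2 ⟨n, hzV⟩⟩
  have hGd : Dense (⋂ V ∈ b, ⋃ n : ℕ, (fun x => (T ^ n) x) ⁻¹' V) :=
    dense_biInter_of_isOpen hGopen hbc hGdense
  obtain ⟨x, hx⟩ := hGd.nonempty
  refine ⟨x, ?_⟩
  rw [hb.dense_iff]
  intro o ho hone
  have : x ∈ ⋃ n : ℕ, (fun x => (T ^ n) x) ⁻¹' o := by
    exact Set.mem_iInter₂.1 hx o ho
  obtain ⟨n, hn⟩ := Set.mem_iUnion.1 this
  exact ⟨(T ^ n) x, hn, ⟨n, rfl⟩⟩
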